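/- arXiv:2304.01475 — 5 statements merged into one kernel-verified Lean document; each statement's English description precedes it below -/
import Mathlib

section
/- For every robustness tree T over a type X, every real k > 0 and every subset S ⊆ X, the original problem and its robustness decomposition have the same global optimum: the real infimum of the set {V̄_k(T,x) : x ∈ S and V̄_k(T,x) ≤ 0} equals the real infimum of the set {s ∈ ℝ : ∃ x ∈ S, s ≤ 0 and Dec_k(T,x,s)}. -/
/-- The smoothed minimum of two reals (log-sum-exp under-approximation). -/
noncomputable def smin (k a b : ℝ) : ℝ :=
  -(1 / k) * Real.log (Real.exp (-k * a) + Real.exp (-k * b))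

/-- A robustness tree: leaves are predicates, `maxN` are conjunction-like nodes,
`minN` are disjunction-like nodes. -/
inductive RTree (X : Type*) where
  | leaf : (X → ℝ) → RTree X
  | maxN : RTree X → RTree X → RTree X
  | minN : RTree X → RTree X → RTree X

/-- The smoothed (reversed) robustness value of a tree. -/
noncomputable def sVal {X : Type*} (k : ℝ) : RTree X → X → ℝ
  | RTree.leaf g, x => g x
  | RTree.maxN t1 t2, x => max (sVal k t1 x) (sVal k t2 x)
  | RTree.minN t1 t2, x => smin k (sVal k t1 x) (sVal k t2 x)

/-- The decomposed-feasibility predicate of the robustness decomposition. -/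
def Dec {X : Type*} (k : ℝ) : RTree X → X → ℝ → Prop
  | RTree.leaf g, x, s => g x ≤ s
  | RTree.maxN t1 t2, x, s => Dec k t1 x s ∧ Dec k t2 x s
  | RTree.minN t1 t2, x, s =>
      ∃ s1 s2 : ℝ, Dec k t1 x s1 ∧ Dec k t2 x s2 ∧ smin k s1 s2 ≤ s

lemma smin_mono (k : ℝ) (hk : 0 < k) {a b a' b' : ℝ} (ha : a ≤ a') (hb : b ≤ b') :
    smin k a b ≤ smin k a' b' := by
  have hlog : Real.log (Real.exp (-k * a') + Real.exp (-k * b')) ≤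
      Real.log (Real.exp (-k * a) + Real.exp (-k * b)) := by
    apply Real.log_le_log (by positivity)
    exact add_le_add (Real.exp_le_exp.mpr (by nlinarith)) (Real.exp_le_exp.mpr (by nlinarith))
  unfold smin
  nlinarith [one_div_pos.mpr hk, mul_le_mul_of_nonneg_left hlog (le_of_lt (one_div_pos.mpr hk))]

lemma dec_iff {X : Type*} (k : ℝ) (hk : 0 < k) (T : RTree X) (x : X) (s : ℝ) :
    Dec k T x s ↔ sVal k T x ≤ s := by
  induction T generalizing s with
  | leaf g => simp [Dec, sVal]
  | maxN t1 t2 ih1 ih2 => simp [Dec, sVal, ih1, ih2, max_le_iff]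
  | minN t1 t2 ih1 ih2 =>
    simp only [Dec, sVal]
    constructor
    · rintro ⟨s1, s2, h1, h2, h⟩
      exact le_trans (smin_mono k hk ((ih1 s1).mp h1) ((ih2 s2).mp h2)) h
    · intro h
      exact ⟨sVal k t1 x, sVal k t2 x, (ih1 _).mpr le_rfl, (ih2 _).mpr le_rfl, h⟩

lemma sInf_eq_of_forall {A B : Set ℝ} (hAB : A ⊆ B) (h : ∀ b ∈ B, ∃ a ∈ A, a ≤ b) :
    sInf A = sInf B := by
  rcases A.eq_empty_or_nonempty with hA | hA
  · have hB : B = ∅ := by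
      by_contra hB
      obtain ⟨b, hb⟩ := Set.nonempty_iff_ne_empty.mpr hB
      obtain ⟨a, ha, _⟩ := h b hb
      exact absurd ha (by simp [hA])
    rw [hA, hB]
  · have hB : B.Nonempty := ⟨_, hAB hA.choose_spec⟩
    by_cases hbd : BddBelow B
    · have hbdA : BddBelow A := hbd.mono hAB
      apply le_antisymm
      · apply le_csInf hB
        intro b hb
        obtain ⟨a, ha, hab⟩ := h b hb
        exact le_trans (csInf_le hbdA ha) hab
      · exact csInf_le_csInf hbd hA hAB
    · have hbdA : ¬ BddBelow A := by
        intro ⟨m, hm⟩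
        apply hbd
        refine ⟨m, fun b hb => ?_⟩
        obtain ⟨a, ha, hab⟩ := h b hb
        exact le_trans (hm ha) hab
      rw [Real.sInf_of_not_bddBelow hbdA, Real.sInf_of_not_bddBelow hbd]

theorem decomposition_same_global_optimum {X : Type*} (T : RTree X) (k : ℝ) (hk : 0 < k)
    (S : Set X) :
    sInf {v : ℝ | ∃ x ∈ S, sVal k T x ≤ 0 ∧ v = sVal k T x} =
      sInf {s : ℝ | ∃ x ∈ S, s ≤ 0 ∧ Dec k T x s} := by
  apply sInf_eq_of_forall
  · rintro v ⟨x, hx, hv0, rfl⟩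
    exact ⟨x, hx, hv0, (dec_iff k hk T x _).mpr le_rfl⟩
  · rintro s ⟨x, hx, hs0, hd⟩
    have := (dec_iff k hk T x s).mp hd
    exact ⟨sVal k T x, ⟨x, hx, le_trans this hs0, rfl⟩, this⟩
end

section
/- Let T be a robustness tree over a type X, k > 0 a real, and S ⊆ X. Suppose x' ∈ S and s' ∈ ℝ satisfy s' ≤ 0 and Dec_k(T, x', s'), and (x', s') is optimal for the decomposed problem, i.e. s' ≤ s for every x ∈ S and s ∈ ℝ with s ≤ 0 and Dec_k(T,x,s). Then V̄_k(T,x') = s' and x' is optimal for the original problem: V̄_k(T,x') ≤ 0 and V̄_k(T,x') ≤ V̄_k(T,x) for every x ∈ S with V̄_k(T,x) ≤ 0. -/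
lemma Dec_mono {X : Type*} (k : ℝ) (T : RTree X) (x : X) {s s' : ℝ} (h : Dec k T x s)
    (hs : s ≤ s') : Dec k T x s' := by
  induction T generalizing s s' with
  | leaf g => exact le_trans h hs
  | maxN t1 t2 ih1 ih2 => exact ⟨ih1 h.1 hs, ih2 h.2 hs⟩
  | minN t1 t2 ih1 ih2 =>
    obtain ⟨s1, s2, h1, h2, hm⟩ := h
    exact ⟨s1, s2, h1, h2, le_trans hm hs⟩

lemma Dec_of_le {X : Type*} (k : ℝ) (hk : 0 < k) (T : RTree X) (x : X) {s : ℝ}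
    (h : sVal k T x ≤ s) : Dec k T x s := by
  induction T generalizing s with
  | leaf g => exact h
  | maxN t1 t2 ih1 ih2 =>
    exact ⟨ih1 (le_trans (le_max_left _ _) h), ih2 (le_trans (le_max_right _ _) h)⟩
  | minN t1 t2 ih1 ih2 =>
    exact ⟨_, _, ih1 le_rfl, ih2 le_rfl, h⟩

lemma le_of_Dec {X : Type*} (k : ℝ) (hk : 0 < k) (T : RTree X) (x : X) {s : ℝ}
    (h : Dec k T x s) : sVal k T x ≤ s := by
  induction T generalizing s with
  | leaf g => exact h
  | maxN t1 t2 ih1 ih2 => exact max_le (ih1 h.1) (ih2 h.2)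
  | minN t1 t2 ih1 ih2 =>
    obtain ⟨s1, s2, h1, h2, hm⟩ := h
    exact le_trans (smin_mono k hk (ih1 h1) (ih2 h2)) hm

theorem decomposed_optimal_implies_original_optimal {X : Type*} (T : RTree X) (k : ℝ)
    (hk : 0 < k) (S : Set X) (x' : X) (s' : ℝ) (hxS : x' ∈ S) (hs0 : s' ≤ 0)
    (hdec : Dec k T x' s')
    (hopt : ∀ x ∈ S, ∀ s : ℝ, s ≤ 0 → Dec k T x s → s' ≤ s) :
    sVal k T x' = s' ∧ sVal k T x' ≤ 0 ∧
      ∀ x ∈ S, sVal k T x ≤ 0 → sVal k T x' ≤ sVal k T x := by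
  have hle : sVal k T x' ≤ s' := le_of_Dec k hk T x' hdec
  have hge : s' ≤ sVal k T x' :=
    hopt x' hxS _ (le_trans hle hs0) (Dec_of_le k hk T x' le_rfl)
  have heq : sVal k T x' = s' := le_antisymm hle hge
  refine ⟨heq, le_trans hle hs0, fun x hx hx0 => ?_⟩
  calc sVal k T x' ≤ s' := hle
    _ ≤ sVal k T x := hopt x hx _ hx0 (Dec_of_le k hk T x le_rfl)
end

section
/- For every robustness tree T over a type X, every real k > 0 and every x ∈ X, the smoothed value under-approximates the exact value: V̄_k(T, x) ≤ V(T, x). -/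
/-- The exact (non-smoothed) robustness value of a tree. -/
noncomputable def eVal {X : Type*} : RTree X → X → ℝ
  | RTree.leaf g, x => g x
  | RTree.maxN t1 t2, x => max (eVal t1 x) (eVal t2 x)
  | RTree.minN t1 t2, x => min (eVal t1 x) (eVal t2 x)

/-- The min-depth of a robustness tree. -/
def mdepth {X : Type*} : RTree X → ℕ
  | RTree.leaf _ => 0
  | RTree.maxN t1 t2 => max (mdepth t1) (mdepth t2)
  | RTree.minN t1 t2 => 1 + max (mdepth t1) (mdepth t2)


lemma smin_le_min (k a b : ℝ) (hk : 0 < k) : smin k a b ≤ min a b := by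
  have h : ∀ c d : ℝ, smin k c d ≤ c := by
    intro c d
    have h1 : Real.exp (-k * c) ≤ Real.exp (-k * c) + Real.exp (-k * d) :=
      le_add_of_nonneg_right (Real.exp_pos _).le
    have h2 : Real.log (Real.exp (-k * c)) ≤ Real.log (Real.exp (-k * c) + Real.exp (-k * d)) :=
      Real.log_le_log (Real.exp_pos _) h1
    rw [Real.log_exp] at h2
    have h3 := mul_le_mul_of_nonneg_left h2 (one_div_pos.mpr hk).le
    have h4 : (1 / k) * (-k * c) = -c := by field_simp
    unfold smin
    linarith
  refine le_min (h a b) ?_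
  have := h b a
  unfold smin at this ⊢
  rwa [add_comm]

theorem sVal_le_eVal {X : Type*} (T : RTree X) (k : ℝ) (hk : 0 < k) (x : X) :
    sVal k T x ≤ eVal T x := by
  induction T with
  | leaf g => simp [sVal, eVal]
  | maxN t1 t2 ih1 ih2 => simp only [sVal, eVal]; exact max_le_max ih1 ih2
  | minN t1 t2 ih1 ih2 =>
    simp only [sVal, eVal]
    calc smin k (sVal k t1 x) (sVal k t2 x) ≤ min (sVal k t1 x) (sVal k t2 x) :=
          smin_le_min _ _ _ hk
      _ ≤ _ := min_le_min ih1 ih2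
end

section
/- For every robustness tree T over a type X, every real k > 0 and every x ∈ X, the smoothing error is at most d(T)·(ln 2)/k: V(T, x) − d(T)·(ln 2)/k ≤ V̄_k(T, x) ≤ V(T, x). In particular, for fixed T and x, V̄_k(T,x) converges to V(T,x) as k → ∞, so the smoothing error can be made arbitrarily small by taking k sufficiently large. -/
lemma min_sub_le_smin (k a b : ℝ) (hk : 0 < k) :
    min a b - Real.log 2 / k ≤ smin k a b := by
  set m := min a b with hm
  have h1 : Real.exp (-k * a) ≤ Real.exp (-k * m) :=
    Real.exp_le_exp.2 (by nlinarith [min_le_left a b])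
  have h2 : Real.exp (-k * b) ≤ Real.exp (-k * m) :=
    Real.exp_le_exp.2 (by nlinarith [min_le_right a b])
  have hS : (0:ℝ) < Real.exp (-k * a) + Real.exp (-k * b) := by positivity
  have hlog : Real.log (Real.exp (-k * a) + Real.exp (-k * b)) ≤ Real.log 2 + -k * m := by
    calc Real.log (Real.exp (-k * a) + Real.exp (-k * b))
        ≤ Real.log (2 * Real.exp (-k * m)) := Real.log_le_log hS (by linarith)
      _ = Real.log 2 + -k * m := by
          rw [Real.log_mul two_ne_zero (Real.exp_ne_zero _), Real.log_exp]
  have hnp : -(1 / k) ≤ 0 := neg_nonpos.2 (by positivity)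
  have := mul_le_mul_of_nonpos_left hlog hnp
  calc m - Real.log 2 / k = -(1 / k) * (Real.log 2 + -k * m) := by field_simp; ring
    _ ≤ smin k a b := this

lemma sVal_bound {X : Type*} (T : RTree X) (k : ℝ) (hk : 0 < k) (x : X) :
    eVal T x - (mdepth T : ℝ) * Real.log 2 / k ≤ sVal k T x ∧ sVal k T x ≤ eVal T x := by
  induction T with
  | leaf g => simp [eVal, sVal, mdepth]
  | maxN t1 t2 ih1 ih2 =>
      have hlog2 : (0:ℝ) ≤ Real.log 2 := Real.log_nonneg one_le_two
      have hd1 : (mdepth t1 : ℝ) ≤ (mdepth (RTree.maxN t1 t2) : ℝ) := by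
        exact_mod_cast le_max_left _ _
      have hd2 : (mdepth t2 : ℝ) ≤ (mdepth (RTree.maxN t1 t2) : ℝ) := by
        exact_mod_cast le_max_right _ _
      constructor
      · have b1 : eVal t1 x - (mdepth (RTree.maxN t1 t2) : ℝ) * Real.log 2 / k ≤ sVal k t1 x := by
          have : (mdepth t1 : ℝ) * Real.log 2 / k ≤
              (mdepth (RTree.maxN t1 t2) : ℝ) * Real.log 2 / k := by
            apply div_le_div_of_nonneg_right ?_ hk.le |>.trans_eq rfl
            exact mul_le_mul_of_nonneg_right hd1 hlog2
          linarith [ih1.1]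
        have b2 : eVal t2 x - (mdepth (RTree.maxN t1 t2) : ℝ) * Real.log 2 / k ≤ sVal k t2 x := by
          have : (mdepth t2 : ℝ) * Real.log 2 / k ≤
              (mdepth (RTree.maxN t1 t2) : ℝ) * Real.log 2 / k := by
            apply div_le_div_of_nonneg_right ?_ hk.le |>.trans_eq rfl
            exact mul_le_mul_of_nonneg_right hd2 hlog2
          linarith [ih2.1]
        show max (eVal t1 x) (eVal t2 x) - _ ≤ max (sVal k t1 x) (sVal k t2 x)
        rcases max_cases (eVal t1 x) (eVal t2 x) with ⟨h, _⟩ | ⟨h, _⟩ <;> rw [h]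
        · exact le_max_of_le_left b1
        · exact le_max_of_le_right b2
      · exact max_le_max ih1.2 ih2.2
  | minN t1 t2 ih1 ih2 =>
      have hlog2 : (0:ℝ) ≤ Real.log 2 := Real.log_nonneg one_le_two
      have hD : (mdepth (RTree.minN t1 t2) : ℝ) =
          1 + max (mdepth t1 : ℝ) (mdepth t2 : ℝ) := by
        show ((1 + max (mdepth t1) (mdepth t2) : ℕ) : ℝ) = _
        push_cast [Nat.cast_max]; ring
      constructor
      · have key := min_sub_le_smin k (sVal k t1 x) (sVal k t2 x) hk
        have hd1 : (mdepth t1 : ℝ) ≤ max (mdepth t1 : ℝ) (mdepth t2 : ℝ) := le_max_left _ _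
        have hd2 : (mdepth t2 : ℝ) ≤ max (mdepth t1 : ℝ) (mdepth t2 : ℝ) := le_max_right _ _
        have b1 : eVal t1 x - max (mdepth t1 : ℝ) (mdepth t2 : ℝ) * Real.log 2 / k ≤
            sVal k t1 x := by
          have : (mdepth t1 : ℝ) * Real.log 2 / k ≤
              max (mdepth t1 : ℝ) (mdepth t2 : ℝ) * Real.log 2 / k :=
            div_le_div_of_nonneg_right (mul_le_mul_of_nonneg_right hd1 hlog2) hk.le
          linarith [ih1.1]
        have b2 : eVal t2 x - max (mdepth t1 : ℝ) (mdepth t2 : ℝ) * Real.log 2 / k ≤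
            sVal k t2 x := by
          have : (mdepth t2 : ℝ) * Real.log 2 / k ≤
              max (mdepth t1 : ℝ) (mdepth t2 : ℝ) * Real.log 2 / k :=
            div_le_div_of_nonneg_right (mul_le_mul_of_nonneg_right hd2 hlog2) hk.le
          linarith [ih2.1]
        show min (eVal t1 x) (eVal t2 x) - (mdepth (RTree.minN t1 t2) : ℝ) * Real.log 2 / k ≤
          smin k (sVal k t1 x) (sVal k t2 x)
        have hmin : min (eVal t1 x) (eVal t2 x) -
            max (mdepth t1 : ℝ) (mdepth t2 : ℝ) * Real.log 2 / k ≤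
            min (sVal k t1 x) (sVal k t2 x) := by
          rcases min_cases (eVal t1 x) (eVal t2 x) with ⟨h, _⟩ | ⟨h, _⟩ <;> rw [h]
          · exact le_min (by linarith [min_le_left (eVal t1 x) (eVal t2 x)]) (by linarith)
          · exact le_min (by linarith) (by linarith)
        rw [hD]
        have : (1 + max (mdepth t1 : ℝ) (mdepth t2 : ℝ)) * Real.log 2 / k =
            Real.log 2 / k + max (mdepth t1 : ℝ) (mdepth t2 : ℝ) * Real.log 2 / k := by
          ring
        rw [this]
        linarith
      · calc sVal k (RTree.minN t1 t2) x = smin k (sVal k t1 x) (sVal k t2 x) := rfl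
          _ ≤ min (sVal k t1 x) (sVal k t2 x) := smin_le_min _ _ _ hk
          _ ≤ min (eVal t1 x) (eVal t2 x) := min_le_min ih1.2 ih2.2
          _ = eVal (RTree.minN t1 t2) x := rfl

theorem smoothing_error_bound {X : Type*} (T : RTree X) (k : ℝ) (hk : 0 < k) (x : X) :
    (eVal T x - (mdepth T : ℝ) * Real.log 2 / k ≤ sVal k T x ∧
      sVal k T x ≤ eVal T x) ∧
      Filter.Tendsto (fun κ : ℝ => sVal κ T x) Filter.atTop (nhds (eVal T x)) := by
  refine ⟨sVal_bound T k hk x, ?_⟩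
  have hlo : Filter.Tendsto (fun κ : ℝ => eVal T x - (mdepth T : ℝ) * Real.log 2 / κ)
      Filter.atTop (nhds (eVal T x)) := by
    have h0 : Filter.Tendsto (fun κ : ℝ => (mdepth T : ℝ) * Real.log 2 / κ)
        Filter.atTop (nhds 0) := Filter.Tendsto.div_atTop tendsto_const_nhds Filter.tendsto_id
    simpa using tendsto_const_nhds.sub h0
  refine tendsto_of_tendsto_of_tendsto_of_le_of_le' hlo tendsto_const_nhds ?_ ?_
  · filter_upwards [Filter.eventually_gt_atTop (0:ℝ)] with κ hκ
    exact (sVal_bound T κ hκ x).1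
  · filter_upwards [Filter.eventually_gt_atTop (0:ℝ)] with κ hκ
    exact (sVal_bound T κ hκ x).2
end

section
/- For every robustness tree T over a type X, every real k > 0, every x ∈ X and every s ∈ ℝ, if Dec_k(T, x, s) holds and s ≤ 0, then the exact (non-smoothed) value satisfies V(T, x) ≤ d(T)·(ln 2)/k. Hence any point feasible for the decomposed constraint system violates the exact reversed-robustness constraint V(T,x) ≤ 0 by at most d(T)·(ln 2)/k, an amount that tends to 0 as k → ∞. -/
lemma min_le_smin_add (k a b : ℝ) (hk : 0 < k) :
    min a b ≤ smin k a b + Real.log 2 / k := by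
  have ha : Real.exp (-k * a) ≤ Real.exp (-k * min a b) :=
    Real.exp_le_exp.mpr (by nlinarith [min_le_left a b])
  have hb : Real.exp (-k * b) ≤ Real.exp (-k * min a b) :=
    Real.exp_le_exp.mpr (by nlinarith [min_le_right a b])
  have hpos : 0 < Real.exp (-k * a) + Real.exp (-k * b) := by positivity
  have hsum : Real.exp (-k * a) + Real.exp (-k * b) ≤ 2 * Real.exp (-k * min a b) := by
    linarith
  have hlog : Real.log (Real.exp (-k * a) + Real.exp (-k * b))
      ≤ Real.log 2 + (-k * min a b) := by
    calc Real.log (Real.exp (-k * a) + Real.exp (-k * b))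
        ≤ Real.log (2 * Real.exp (-k * min a b)) := Real.log_le_log hpos hsum
      _ = Real.log 2 + (-k * min a b) := by
          rw [Real.log_mul (by norm_num) (Real.exp_ne_zero _), Real.log_exp]
  unfold smin
  rw [div_eq_mul_inv, div_eq_mul_inv] at *
  have hinv : 0 ≤ k⁻¹ := (inv_pos.mpr hk).le
  have h2 := mul_le_mul_of_nonneg_left hlog hinv
  have h3 : k⁻¹ * (Real.log 2 + -k * min a b)
      = k⁻¹ * Real.log 2 - (k⁻¹ * k) * min a b := by ring
  rw [h3, inv_mul_cancel₀ hk.ne'] at h2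
  linarith

lemma dec_bound {X : Type*} (k : ℝ) (hk : 0 < k) :
    ∀ (T : RTree X) (x : X) (s : ℝ), Dec k T x s →
      eVal T x ≤ s + (mdepth T : ℝ) * Real.log 2 / k := by
  have hc : 0 ≤ Real.log 2 / k := div_nonneg (Real.log_nonneg one_le_two) hk.le
  intro T
  induction T with
  | leaf g =>
      intro x s h
      simp only [Dec] at h
      simp only [eVal, mdepth, Nat.cast_zero, zero_mul, zero_div]
      linarith
  | maxN t1 t2 ih1 ih2 =>
      intro x s h
      obtain ⟨h1, h2⟩ := h
      have b1 := ih1 x s h1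
      have b2 := ih2 x s h2
      simp only [eVal, mdepth, Nat.cast_max]
      have m1 : (mdepth t1 : ℝ) ≤ max (mdepth t1 : ℝ) (mdepth t2 : ℝ) := le_max_left _ _
      have m2 : (mdepth t2 : ℝ) ≤ max (mdepth t1 : ℝ) (mdepth t2 : ℝ) := le_max_right _ _
      have e1 : (mdepth t1 : ℝ) * Real.log 2 / k
          ≤ max (mdepth t1 : ℝ) (mdepth t2 : ℝ) * Real.log 2 / k := by
        apply div_le_div_of_nonneg_right ?_ hk.le
        exact mul_le_mul_of_nonneg_right m1 (Real.log_nonneg one_le_two)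
      have e2 : (mdepth t2 : ℝ) * Real.log 2 / k
          ≤ max (mdepth t1 : ℝ) (mdepth t2 : ℝ) * Real.log 2 / k := by
        apply div_le_div_of_nonneg_right ?_ hk.le
        exact mul_le_mul_of_nonneg_right m2 (Real.log_nonneg one_le_two)
      exact max_le (by linarith) (by linarith)
  | minN t1 t2 ih1 ih2 =>
      intro x s h
      obtain ⟨s1, s2, h1, h2, hmin⟩ := h
      have b1 := ih1 x s1 h1
      have b2 := ih2 x s2 h2
      have hsm := min_le_smin_add k s1 s2 hk
      simp only [eVal, mdepth, Nat.cast_add, Nat.cast_one, Nat.cast_max]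
      have m1 : (mdepth t1 : ℝ) ≤ max (mdepth t1 : ℝ) (mdepth t2 : ℝ) := le_max_left _ _
      have m2 : (mdepth t2 : ℝ) ≤ max (mdepth t1 : ℝ) (mdepth t2 : ℝ) := le_max_right _ _
      have e1 : (mdepth t1 : ℝ) * Real.log 2 / k
          ≤ max (mdepth t1 : ℝ) (mdepth t2 : ℝ) * Real.log 2 / k := by
        apply div_le_div_of_nonneg_right ?_ hk.le
        exact mul_le_mul_of_nonneg_right m1 (Real.log_nonneg one_le_two)
      have e2 : (mdepth t2 : ℝ) * Real.log 2 / k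
          ≤ max (mdepth t1 : ℝ) (mdepth t2 : ℝ) * Real.log 2 / k := by
        apply div_le_div_of_nonneg_right ?_ hk.le
        exact mul_le_mul_of_nonneg_right m2 (Real.log_nonneg one_le_two)
      have key : min (eVal t1 x) (eVal t2 x)
          ≤ min s1 s2 + max (mdepth t1 : ℝ) (mdepth t2 : ℝ) * Real.log 2 / k := by
        rcases le_total s1 s2 with hle | hle
        · calc min (eVal t1 x) (eVal t2 x) ≤ eVal t1 x := min_le_left _ _
            _ ≤ s1 + (mdepth t1 : ℝ) * Real.log 2 / k := b1
            _ ≤ min s1 s2 + max (mdepth t1 : ℝ) (mdepth t2 : ℝ) * Real.log 2 / k := by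
                rw [min_eq_left hle]; linarith
        · calc min (eVal t1 x) (eVal t2 x) ≤ eVal t2 x := min_le_right _ _
            _ ≤ s2 + (mdepth t2 : ℝ) * Real.log 2 / k := b2
            _ ≤ min s1 s2 + max (mdepth t1 : ℝ) (mdepth t2 : ℝ) * Real.log 2 / k := by
                rw [min_eq_right hle]; linarith
      have : (1 + max (mdepth t1 : ℝ) (mdepth t2 : ℝ)) * Real.log 2 / k
          = Real.log 2 / k + max (mdepth t1 : ℝ) (mdepth t2 : ℝ) * Real.log 2 / k := by
        ring
      rw [this]
      linarith

theorem dec_implies_exact_violation_bound {X : Type*} (T : RTree X) (k : ℝ) (hk : 0 < k)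
    (x : X) (s : ℝ) (hdec : Dec k T x s) (hs : s ≤ 0) :
    eVal T x ≤ (mdepth T : ℝ) * Real.log 2 / k := by
  have := dec_bound k hk T x s hdec
  linarith
end
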